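/- Let A : ℝ → ℝ be locally Lipschitz with A = 0 on (−∞, 0], and suppose there exist l∞ > 0 and ζ > 0 with A(s) ≥ −l∞ for all s > ζ. Let Ω ⊂ ℝⁿ be bounded open with B(x₀,r) ⊂ Ω, k > 0, and L∞ > 0 satisfy ½C(r,n) + (k/2 + l∞)m(Ω) < L∞ (r/2)ⁿ ω_n. If (s̃_i) ⊂ (0,∞) with s̃_i → ∞ and A(s̃_i) > L∞ s̃_i² for all i, then T(w_{s̃_i}) → −∞ as i → ∞, where T(u) = ½‖u‖²_{H₀¹} + (k/2)∫_Ω u² − ∫_Ω A(u) and w_s is the standard truncation function with plateau value s. -/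

import Mathlib

open Filter Topology MeasureTheory

set_option maxHeartbeats 1000000 in
theorem stmt14 (n : ℕ) (Ω : Set (EuclideanSpace ℝ (Fin n))) (hΩo : IsOpen Ω)
    (hΩb : Bornology.IsBounded Ω)
    (x₀ : EuclideanSpace ℝ (Fin n)) (r : ℝ) (hr : 0 < r) (hball : Metric.ball x₀ r ⊆ Ω)
    (k : ℝ) (hk : 0 < k)
    (A : ℝ → ℝ) (hA : LocallyLipschitz A) (hAneg : ∀ s ≤ (0 : ℝ), A s = 0)
    (linf ζ : ℝ) (hlinf : 0 < linf) (hζ : 0 < ζ)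
    (hAlow : ∀ s > ζ, -linf ≤ A s)
    (ωn : ℝ) (hωn : ωn = (MeasureTheory.volume
      (Metric.ball (0 : EuclideanSpace ℝ (Fin n)) 1)).toReal)
    (mΩ : ℝ) (hmΩ : mΩ = (MeasureTheory.volume Ω).toReal)
    (C : ℝ) (hC : C = 4 * r ^ ((n : ℝ) - 2) * (1 - ((2 : ℝ) ^ n)⁻¹) * ωn)
    (Linf : ℝ) (hLinf : (1 / 2) * C + (k / 2 + linf) * mΩ < Linf * (r / 2) ^ n * ωn)
    (st : ℕ → ℝ) (hstpos : ∀ i, 0 < st i) (hsttop : Filter.Tendsto st Filter.atTop Filter.atTop)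
    (hAst : ∀ i, Linf * st i ^ 2 < A (st i))
    (w : ℝ → EuclideanSpace ℝ (Fin n) → ℝ)
    (hw : ∀ s x, w s x = if dist x x₀ ≤ r / 2 then s
      else if dist x x₀ < r then (2 * s / r) * (r - dist x x₀) else 0)
    (T : (EuclideanSpace ℝ (Fin n) → ℝ) → ℝ)
    (hT : ∀ u, T u = (1 / 2) * (∫ x in Ω, ‖fderiv ℝ u x‖ ^ 2) +
      (k / 2) * (∫ x in Ω, (u x) ^ 2) - ∫ x in Ω, A (u x)) :
    Filter.Tendsto (fun i => T (w (st i))) Filter.atTop Filter.atBot := by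
  have hΩfin : volume Ω < ⊤ := hΩb.measure_lt_top
  have hmΩ0 : 0 ≤ mΩ := hmΩ ▸ ENNReal.toReal_nonneg
  have hωn0 : 0 ≤ ωn := hωn ▸ ENNReal.toReal_nonneg
  have hr2 : (0:ℝ) < r / 2 := by linarith
  -- volume of balls
  have hvol : ∀ ρ : ℝ, 0 < ρ → (volume (Metric.ball x₀ ρ)).toReal = ρ ^ n * ωn := by
    intro ρ hρ
    rcases Nat.eq_zero_or_pos n with h0 | hpos
    · subst h0
      have e1 : Metric.ball x₀ ρ = Set.univ :=
        Set.eq_univ_of_forall fun y => by simp [Metric.mem_ball, Subsingleton.elim y x₀, hρ]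
      have e2 : Metric.ball (0 : EuclideanSpace ℝ (Fin 0)) 1 = Set.univ :=
        Set.eq_univ_of_forall fun y => by
          simp [Metric.mem_ball, Subsingleton.elim y (0 : EuclideanSpace ℝ (Fin 0))]
      rw [hωn, e1, e2]; simp
    · haveI : Nontrivial (EuclideanSpace ℝ (Fin n)) :=
        Module.nontrivial_of_finrank_pos (R := ℝ) (by simp [finrank_euclideanSpace_fin, hpos])
      rw [Measure.addHaar_ball volume x₀ hρ.le, finrank_euclideanSpace_fin,
        ENNReal.toReal_mul, ENNReal.toReal_ofReal (by positivity), hωn]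
  have hvolc : (volume (Metric.closedBall x₀ r)).toReal = r ^ n * ωn := by
    rw [Measure.addHaar_closedBall volume x₀ hr.le, finrank_euclideanSpace_fin,
      ENNReal.toReal_mul, ENNReal.toReal_ofReal (by positivity), hωn]
  set D : Set (EuclideanSpace ℝ (Fin n)) :=
    Metric.closedBall x₀ r \ Metric.ball x₀ (r/2) with hD
  have hDsub : Metric.ball x₀ (r/2) ⊆ Metric.closedBall x₀ r :=
    (Metric.ball_subset_ball (by linarith)).trans Metric.ball_subset_closedBall
  have hDfin : volume D ≠ ⊤ :=
    ((measure_mono Set.diff_subset).trans_lt measure_closedBall_lt_top).ne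
  have hvolD : (volume D).toReal = (r ^ n - (r/2) ^ n) * ωn := by
    rw [hD, measure_diff hDsub measurableSet_ball.nullMeasurableSet measure_ball_lt_top.ne,
      ENNReal.toReal_sub_of_le (measure_mono hDsub) measure_closedBall_lt_top.ne,
      hvolc, hvol (r/2) hr2]
    ring
  -- global bound for A on [0, ζ]
  obtain ⟨M, hM⟩ := isCompact_Icc.exists_bound_of_continuousOn
    (hA.continuous.continuousOn : ContinuousOn A (Set.Icc 0 ζ))
  have hM0 : 0 ≤ M := (norm_nonneg (A 0)).trans (hM 0 ⟨le_refl 0, hζ.le⟩)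
  set α : ℝ := 1/2 * C + k/2 * mΩ - Linf * (r/2)^n * ωn with hα_def
  set β : ℝ := (linf + M) * mΩ with hβ_def
  -- key per-index bound
  have key : ∀ i, T (w (st i)) ≤ α * st i ^ 2 + β := by
    intro i
    set s := st i with hs_def
    have hs : 0 < s := hstpos i
    -- pointwise bounds on w s
    have hwval : ∀ x, 0 ≤ w s x ∧ w s x ≤ s := by
      intro x
      rw [hw]
      split_ifs with h1 h2
      · exact ⟨hs.le, le_refl s⟩
      · have hd : 0 ≤ dist x x₀ := dist_nonneg
        push_neg at h1
        constructor
        · have : (0:ℝ) ≤ r - dist x x₀ := by linarith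
          positivity
        · rw [div_mul_eq_mul_div, div_le_iff₀ hr]
          nlinarith
      · exact ⟨le_refl 0, hs.le⟩
    -- w s as a function of the distance
    have e : ∀ z, w s z = (2*s/r) * min (max (r - dist z x₀) 0) (r/2) := by
      intro z
      rw [hw]
      split_ifs with h1 h2
      · rw [max_eq_left (by nlinarith [dist_nonneg (x := z) (y := x₀)]),
          min_eq_right (by linarith)]
        field_simp
      · push_neg at h1
        rw [max_eq_left (by linarith), min_eq_left (by linarith)]
      · push_neg at h1 h2
        rw [max_eq_right (by linarith), min_eq_left (by linarith), mul_zero]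
    -- Lipschitz bound
    set K : NNReal := ⟨2*s/r, by positivity⟩ with hK_def
    have hwlip : LipschitzWith K (w s) := by
      apply LipschitzWith.of_dist_le_mul
      intro x y
      rw [e x, e y, Real.dist_eq, ← mul_sub, abs_mul]
      have hcoe : (K : ℝ) = 2*s/r := rfl
      rw [hcoe]
      have h2 : |max (r - dist x x₀) 0 - max (r - dist y x₀) 0|
          ≤ |dist x x₀ - dist y x₀| := by
        refine (abs_max_sub_max_le_max _ _ _ _).trans ?_
        simp only [sub_zero, abs_zero]
        rw [show r - dist x x₀ - (r - dist y x₀) = -(dist x x₀ - dist y x₀) by ring, abs_neg]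
        exact max_le (le_refl _) (abs_nonneg _)
      have h1 : |min (max (r - dist x x₀) 0) (r/2) - min (max (r - dist y x₀) 0) (r/2)|
          ≤ dist x y := by
        refine (abs_min_sub_min_le_max _ _ _ _).trans ?_
        have h3 : |dist x x₀ - dist y x₀| ≤ dist x y := abs_dist_sub_le x y x₀
        simp only [sub_self, abs_zero]
        exact max_le (h2.trans h3) dist_nonneg
      calc |2*s/r| * |min (max (r - dist x x₀) 0) (r/2) - min (max (r - dist y x₀) 0) (r/2)|
          ≤ |2*s/r| * dist x y := by
            exact mul_le_mul_of_nonneg_left h1 (abs_nonneg _)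
        _ = 2*s/r * dist x y := by rw [abs_of_nonneg (by positivity)]
    have hwcont : Continuous (w s) := hwlip.continuous
    have hfdle : ∀ x, ‖fderiv ℝ (w s) x‖ ≤ 2*s/r := fun x =>
      norm_fderiv_le_of_lipschitz ℝ hwlip
    have hfd0 : ∀ x, x ∉ D → fderiv ℝ (w s) x = 0 := by
      intro x hx
      rw [hD] at hx
      simp only [Set.mem_diff, Metric.mem_closedBall, Metric.mem_ball, not_and, not_not,
        not_le, not_lt] at hx
      by_cases hcb : dist x x₀ ≤ r
      · -- then dist x x₀ < r/2 : locally constant s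
        have hlt : dist x x₀ < r/2 := hx hcb
        have hev : w s =ᶠ[nhds x] fun _ => s := by
          filter_upwards [Metric.ball_mem_nhds x (show 0 < r/2 - dist x x₀ by linarith)] with y hy
          rw [Metric.mem_ball] at hy
          have : dist y x₀ ≤ r/2 := by
            have := dist_triangle y x x₀
            linarith
          rw [hw, if_pos this]
        rw [hev.fderiv_eq, fderiv_fun_const]
        rfl
      · push_neg at hcb
        have hev : w s =ᶠ[nhds x] fun _ => (0:ℝ) := by
          filter_upwards [Metric.ball_mem_nhds x (show 0 < dist x x₀ - r by linarith)] with y hy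
          rw [Metric.mem_ball] at hy
          have hyd : r < dist y x₀ := by
            have := dist_triangle x y x₀
            rw [dist_comm x y] at this
            linarith
          rw [hw, if_neg (by linarith), if_neg (by linarith)]
        rw [hev.fderiv_eq, fderiv_fun_const]
        rfl
    -- Dirichlet integral bound
    have hI1 : ∫ x in Ω, ‖fderiv ℝ (w s) x‖ ^ 2 ≤ C * s ^ 2 := by
      have hmeasD : MeasurableSet D := measurableSet_closedBall.diff Metric.isOpen_ball.measurableSet
      have e1 : ∫ x in Ω, ‖fderiv ℝ (w s) x‖ ^ 2
          = ∫ x in Ω ∩ D, ‖fderiv ℝ (w s) x‖ ^ 2 := by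
        rw [← setIntegral_indicator hmeasD]
        refine setIntegral_congr_fun hΩo.measurableSet fun x _ => ?_
        by_cases hx : x ∈ D
        · rw [Set.indicator_of_mem hx]
        · rw [Set.indicator_of_notMem hx, hfd0 x hx]
          simp
      rw [e1]
      have hfin : volume (Ω ∩ D) < ⊤ :=
        (measure_mono Set.inter_subset_left).trans_lt hΩfin
      have hb : ∀ x ∈ Ω ∩ D, ‖‖fderiv ℝ (w s) x‖ ^ 2‖ ≤ (2*s/r)^2 := by
        intro x _
        rw [Real.norm_of_nonneg (by positivity)]
        exact pow_le_pow_left₀ (norm_nonneg _) (hfdle x) 2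
      have hmeas : AEStronglyMeasurable (fun x => ‖fderiv ℝ (w s) x‖ ^ 2)
          (volume.restrict (Ω ∩ D)) :=
        (((measurable_fderiv ℝ (w s)).norm).pow_const 2).aestronglyMeasurable
      have hbnd := norm_setIntegral_le_of_norm_le_const hfin hb
      have h4 : (volume (Ω ∩ D)).toReal ≤ (volume D).toReal :=
        ENNReal.toReal_mono hDfin (measure_mono Set.inter_subset_right)
      calc ∫ x in Ω ∩ D, ‖fderiv ℝ (w s) x‖ ^ 2
          ≤ ‖∫ x in Ω ∩ D, ‖fderiv ℝ (w s) x‖ ^ 2‖ := le_abs_self _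
        _ ≤ (2*s/r)^2 * (volume (Ω ∩ D)).toReal := hbnd
        _ ≤ (2*s/r)^2 * (volume D).toReal := by
            exact mul_le_mul_of_nonneg_left h4 (by positivity)
        _ = C * s ^ 2 := by
            rw [hvolD, hC]
            have hrn : r ^ ((n:ℝ) - 2) = r ^ n / r ^ 2 := by
              rw [show ((n:ℝ) - 2) = ((n:ℝ) - ((2:ℕ):ℝ)) by norm_num,
                Real.rpow_sub hr, Real.rpow_natCast, Real.rpow_natCast]
            rw [hrn]
            have h2n : ((2:ℝ)^n) ≠ 0 := by positivity
            field_simp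
            have h12 : (1/2:ℝ)^n * 2^n = 1 := by rw [← mul_pow]; norm_num
            linear_combination (-(r ^ n * ωn * 4)) * h12
    -- L² bound
    have hI2 : ∫ x in Ω, (w s x) ^ 2 ≤ s ^ 2 * mΩ := by
      have hb : ∀ x ∈ Ω, ‖(w s x) ^ 2‖ ≤ s ^ 2 := by
        intro x _
        rw [Real.norm_of_nonneg (sq_nonneg _)]
        obtain ⟨h0, h1⟩ := hwval x
        nlinarith
      have hbnd := norm_setIntegral_le_of_norm_le_const hΩfin hb
      rw [hmΩ]
      exact (le_abs_self _).trans hbnd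
    -- integral of A ∘ w s
    set S : Set (EuclideanSpace ℝ (Fin n)) := Metric.ball x₀ (r/2) with hS
    have hSsub : S ⊆ Ω := (Metric.ball_subset_ball (by linarith)).trans hball
    have hwS : ∀ x ∈ S, w s x = s := by
      intro x hx
      rw [hS, Metric.mem_ball] at hx
      rw [hw, if_pos hx.le]
    have hvolS : (volume S).toReal = (r/2) ^ n * ωn := hvol (r/2) hr2
    obtain ⟨M', hM'⟩ := isCompact_Icc.exists_bound_of_continuousOn
      (hA.continuous.continuousOn : ContinuousOn A (Set.Icc 0 s))
    have hint : IntegrableOn (fun x => A (w s x)) Ω := by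
      refine Integrable.mono'
        (show IntegrableOn (fun _ => M') Ω volume from integrableOn_const hΩfin.ne)
        ((hA.continuous.comp hwcont).aestronglyMeasurable) (ae_of_all _ fun x => ?_)
      exact hM' _ ⟨(hwval x).1, (hwval x).2⟩
    have hsplit : ∫ x in Ω, A (w s x)
        = (∫ x in S, A (w s x)) + ∫ x in Ω \ S, A (w s x) := by
      have h := setIntegral_union (Set.disjoint_sdiff_right)
        (hΩo.measurableSet.diff Metric.isOpen_ball.measurableSet)
        (hint.mono_set hSsub) (hint.mono_set Set.diff_subset)
        (f := fun x => A (w s x)) (μ := volume)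
      rw [Set.union_diff_cancel hSsub] at h
      exact h
    have hS_eq : ∫ x in S, A (w s x) = A s * ((r/2) ^ n * ωn) := by
      rw [setIntegral_congr_fun Metric.isOpen_ball.measurableSet
        (fun x hx => by show A (w s x) = A s; rw [hwS x hx] :
          Set.EqOn (fun x => A (w s x)) (fun _ => A s) S),
        setIntegral_const, smul_eq_mul, measureReal_def, hvolS]
      ring
    have hRest : -((linf + M) * mΩ) ≤ ∫ x in Ω \ S, A (w s x) := by
      have hptwise : ∀ x ∈ Ω \ S, -(linf + M) ≤ A (w s x) := by
        intro x _
        obtain ⟨h0, _⟩ := hwval x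
        by_cases ht : ζ < w s x
        · have := hAlow _ ht
          linarith
        · push_neg at ht
          have := hM (w s x) ⟨h0, ht⟩
          rw [Real.norm_eq_abs] at this
          have := abs_le.1 this
          linarith
      have hfinR : volume (Ω \ S) < ⊤ := (measure_mono Set.diff_subset).trans_lt hΩfin
      have h1 : ∫ _x in Ω \ S, (-(linf + M)) ≤ ∫ x in Ω \ S, A (w s x) :=
        setIntegral_mono_on (integrableOn_const hfinR.ne)
          (hint.mono_set Set.diff_subset)
          (hΩo.measurableSet.diff Metric.isOpen_ball.measurableSet) hptwise
      rw [setIntegral_const, smul_eq_mul, measureReal_def] at h1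
      refine le_trans ?_ h1
      rw [mul_comm ((volume (Ω \ S)).toReal)]
      have h2 : (volume (Ω \ S)).toReal ≤ mΩ := by
        rw [hmΩ]
        exact ENNReal.toReal_mono hΩfin.ne (measure_mono Set.diff_subset)
      nlinarith
    -- assemble
    rw [hT]
    have hprod : Linf * s ^ 2 * ((r/2) ^ n * ωn) ≤ A s * ((r/2) ^ n * ωn) :=
      mul_le_mul_of_nonneg_right (hAst i).le (by positivity)
    have hgrad : (1/2) * (∫ x in Ω, ‖fderiv ℝ (w s) x‖ ^ 2) ≤ 1/2 * (C * s ^ 2) := by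
      linarith
    have hsq : (k/2) * (∫ x in Ω, (w s x) ^ 2) ≤ (k/2) * (s ^ 2 * mΩ) :=
      mul_le_mul_of_nonneg_left hI2 (by positivity)
    rw [hα_def, hβ_def]
    have := hsplit
    nlinarith [hS_eq, hRest, hprod]
  -- conclude
  have hα : α < 0 := by
    rw [hα_def]
    nlinarith [mul_nonneg hlinf.le hmΩ0]
  have htb : Tendsto (fun i => α * st i ^ 2 + β) atTop atBot := by
    apply tendsto_atBot_add_const_right
    exact Tendsto.const_mul_atTop_of_neg hα ((tendsto_pow_atTop two_ne_zero).comp hsttop)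
  exact tendsto_atBot_mono' atTop (Filter.Eventually.of_forall key) htb
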